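/- Let A ∈ GL(g,ℝ) and ρ a symmetric negative definite integer g×g matrix. Define the 4g×4g block matrices 𝓘 = [[0,-A,0,0],[A⁻¹,0,0,0],[0,0,0,-A⁻ᵗ],[0,0,Aᵗ,0]] and 𝓙 = [[0,0,0,ρ⁻¹A⁻ᵗ],[0,0,-A⁻¹ρ⁻¹,0],[0,ρA,0,0],[-Aᵗρ,0,0,0]]. Then 𝓘² = -1, 𝓙² = -1, and 𝓘𝓙 = 𝓙𝓘. -/
import Mathlib

/-- For `A ∈ GL(g,ℝ)` and `ρ` symmetric negative definite, the `4g×4g` block matrices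
`𝓘 = [[0,-A,0,0],[A⁻¹,0,0,0],[0,0,0,-A⁻ᵗ],[0,0,Aᵗ,0]]` and
`𝓙 = [[0,0,0,ρ⁻¹A⁻ᵗ],[0,0,-A⁻¹ρ⁻¹,0],[0,ρA,0,0],[-Aᵗρ,0,0,0]]` satisfy
`𝓘² = -1`, `𝓙² = -1` and `𝓘𝓙 = 𝓙𝓘`. -/
theorem stmt17 (g : ℕ) (hg : 0 < g) (A ρ : Matrix (Fin g) (Fin g) ℝ)
    (hA : IsUnit A.det) (hρsymm : ρ.transpose = ρ) (hρneg : (-ρ).PosDef) :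
    let I : Matrix ((Fin g ⊕ Fin g) ⊕ (Fin g ⊕ Fin g))
        ((Fin g ⊕ Fin g) ⊕ (Fin g ⊕ Fin g)) ℝ :=
      Matrix.fromBlocks
        (Matrix.fromBlocks 0 (-A) A⁻¹ 0) 0
        0 (Matrix.fromBlocks 0 (-(A⁻¹.transpose)) A.transpose 0)
    let J : Matrix ((Fin g ⊕ Fin g) ⊕ (Fin g ⊕ Fin g))
        ((Fin g ⊕ Fin g) ⊕ (Fin g ⊕ Fin g)) ℝ :=
      Matrix.fromBlocks
        0 (Matrix.fromBlocks 0 (ρ⁻¹ * A⁻¹.transpose) (-(A⁻¹ * ρ⁻¹)) 0)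
        (Matrix.fromBlocks 0 (ρ * A) (-(A.transpose * ρ)) 0) 0
    I * I = -1 ∧ J * J = -1 ∧ I * J = J * I := by
  have hρdet : IsUnit ρ.det := by
    have h1 : 0 < (-ρ).det := hρneg.det_pos
    have h2 : (-ρ).det = (-1)^g * ρ.det := by simp [Matrix.det_neg]
    have : ρ.det ≠ 0 := by intro h; rw [h2, h] at h1; simp at h1
    exact isUnit_iff_ne_zero.mpr this
  have hAt : IsUnit A.transpose.det := by rwa [Matrix.det_transpose]
  have hAAi : A * A⁻¹ = 1 := Matrix.mul_nonsing_inv A hA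
  have hAiA : A⁻¹ * A = 1 := Matrix.nonsing_inv_mul A hA
  have hT : A⁻¹.transpose = A.transpose⁻¹ := Matrix.transpose_nonsing_inv A
  have hAtAti : A.transpose * A.transpose⁻¹ = 1 := Matrix.mul_nonsing_inv _ hAt
  have hAtiAt : A.transpose⁻¹ * A.transpose = 1 := Matrix.nonsing_inv_mul _ hAt
  have hρρi : ρ * ρ⁻¹ = 1 := Matrix.mul_nonsing_inv ρ hρdet
  have hρiρ : ρ⁻¹ * ρ = 1 := Matrix.nonsing_inv_mul ρ hρdet
  have c1 : ∀ X : Matrix (Fin g) (Fin g) ℝ, A * (A⁻¹ * X) = X := fun X => by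
    rw [← Matrix.mul_assoc, hAAi, Matrix.one_mul]
  have c2 : ∀ X : Matrix (Fin g) (Fin g) ℝ, A⁻¹ * (A * X) = X := fun X => by
    rw [← Matrix.mul_assoc, hAiA, Matrix.one_mul]
  have c3 : ∀ X : Matrix (Fin g) (Fin g) ℝ, A.transpose * (A.transpose⁻¹ * X) = X := fun X => by
    rw [← Matrix.mul_assoc, hAtAti, Matrix.one_mul]
  have c4 : ∀ X : Matrix (Fin g) (Fin g) ℝ, A.transpose⁻¹ * (A.transpose * X) = X := fun X => by
    rw [← Matrix.mul_assoc, hAtiAt, Matrix.one_mul]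
  have c5 : ∀ X : Matrix (Fin g) (Fin g) ℝ, ρ * (ρ⁻¹ * X) = X := fun X => by
    rw [← Matrix.mul_assoc, hρρi, Matrix.one_mul]
  have c6 : ∀ X : Matrix (Fin g) (Fin g) ℝ, ρ⁻¹ * (ρ * X) = X := fun X => by
    rw [← Matrix.mul_assoc, hρiρ, Matrix.one_mul]
  have hneg1 : (-1 : Matrix ((Fin g ⊕ Fin g) ⊕ (Fin g ⊕ Fin g))
      ((Fin g ⊕ Fin g) ⊕ (Fin g ⊕ Fin g)) ℝ) =
      Matrix.fromBlocks (Matrix.fromBlocks (-1) 0 0 (-1)) 0 0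
        (Matrix.fromBlocks (-1) 0 0 (-1)) := by
    ext (i|i) (j|j) <;> rcases i with i|i <;> rcases j with j|j <;>
      simp [Matrix.fromBlocks, Matrix.one_apply]
  intro I J
  refine ⟨?_, ?_, ?_⟩
  · show Matrix.fromBlocks _ _ _ _ * Matrix.fromBlocks _ _ _ _ = _
    rw [hneg1]
    simp [Matrix.fromBlocks_multiply, Matrix.mul_assoc, hT, c1, c2, c3, c4, c5, c6,
      hAAi, hAiA, hAtAti, hAtiAt, hρρi, hρiρ]
  · show Matrix.fromBlocks _ _ _ _ * Matrix.fromBlocks _ _ _ _ = _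
    rw [hneg1]
    simp [Matrix.fromBlocks_multiply, Matrix.mul_assoc, hT, c1, c2, c3, c4, c5, c6,
      hAAi, hAiA, hAtAti, hAtiAt, hρρi, hρiρ]
  · show Matrix.fromBlocks _ _ _ _ * Matrix.fromBlocks _ _ _ _ =
      Matrix.fromBlocks _ _ _ _ * Matrix.fromBlocks _ _ _ _
    simp [Matrix.fromBlocks_multiply, Matrix.mul_assoc, hT, c1, c2, c3, c4, c5, c6,
      hAAi, hAiA, hAtAti, hAtiAt, hρρi, hρiρ]
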